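/- Every finite sequence π of distinct natural numbers admits a unique factorization π = π₀π₁⋯π_k (as a concatenation, with k ≥ 0) in which π₀ is a (possibly empty) strictly increasing sequence and each π_i for 1 ≤ i ≤ k is a hook. -/

import Mathlib

namespace PaperStats

/-- `des w` is the number of descents of the word `w` (0-indexed positions `i`
with `w(i) > w(i+1)`). -/
def des (w : List ℕ) : ℕ :=
  ((Finset.range (w.length - 1)).filter fun i => w.getD (i + 1) 0 < w.getD i 0).card

/-- `inv w` is the number of inversions of the word `w`: pairs of positions
`i < j` with `w(i) > w(j)`. -/
def inv (w : List ℕ) : ℕ :=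
  ((Finset.range w.length ×ˢ Finset.range w.length).filter
    fun p => p.1 < p.2 ∧ w.getD p.2 0 < w.getD p.1 0).card

/-- An inversion `(i,j)` of `w` is admissible if either `w(j) < w(j+1)`
(`j` is not the last position and is followed by an ascent), or there is a
position `k` strictly between `i` and `j` with `w(j) > w(k)`. -/
def IsAdmissible (w : List ℕ) (i j : ℕ) : Prop :=
  (j + 1 < w.length ∧ w.getD j 0 < w.getD (j + 1) 0) ∨
    ∃ k, i < k ∧ k < j ∧ w.getD k 0 < w.getD j 0

instance (w : List ℕ) (i j : ℕ) : Decidable (IsAdmissible w i j) :=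
  decidable_of_iff ((j + 1 < w.length ∧ w.getD j 0 < w.getD (j + 1) 0) ∨
      ∃ k ∈ Finset.Ioo i j, w.getD k 0 < w.getD j 0) (by
    unfold IsAdmissible
    simp only [Finset.mem_Ioo, and_assoc])

/-- `ai w` is the number of admissible inversions of `w`. -/
def ai (w : List ℕ) : ℕ :=
  ((Finset.range w.length ×ˢ Finset.range w.length).filter
    fun p => p.1 < p.2 ∧ w.getD p.2 0 < w.getD p.1 0 ∧ IsAdmissible w p.1 p.2).card

/-- `aid w = ai w + des w`. -/
def aid (w : List ℕ) : ℕ := ai w + des w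

/-- The statistic `aix`, defined recursively: `aix ∅ = 0`; writing a nonempty
word as `π = α m β`, where `m` is the smallest letter and `α` is the maximal
prefix not containing `m`, one has `aix π = 1 + aix β` if `α = ∅`,
`aix π = 0` if `β = ∅` (and `α ≠ ∅`), and `aix π = aix α` otherwise. -/
def aix : List ℕ → ℕ
  | [] => 0
  | x :: xs =>
    if (x :: xs).takeWhile (fun a => decide (a ≠ xs.foldr min x)) = [] then
      1 + aix (((x :: xs).dropWhile (fun a => decide (a ≠ xs.foldr min x))).tail)
    else if ((x :: xs).dropWhile (fun a => decide (a ≠ xs.foldr min x))).tail = [] then 0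
    else aix ((x :: xs).takeWhile (fun a => decide (a ≠ xs.foldr min x)))
termination_by w => w.length
decreasing_by
  all_goals have e : List.foldr (fun (t : {a // a ∈ xs}) s => min t.1 s) x xs.attach =
    xs.foldr min x := List.foldr_attach
  all_goals simp only [e] at *
  · have h1 := (List.dropWhile_sublist (l := x :: xs) (fun a => decide (a ≠ xs.foldr min x))).length_le
    have h2 := List.length_tail (l := (x :: xs).dropWhile (fun a => decide (a ≠ xs.foldr min x)))
    simp only [List.length_cons] at *
    omega
  · rename_i hα hβ
    have h0 : ((x :: xs).takeWhile (fun a => decide (a ≠ xs.foldr min x))) ++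
        ((x :: xs).dropWhile (fun a => decide (a ≠ xs.foldr min x))) = x :: xs :=
      List.takeWhile_append_dropWhile ..
    have h1 : ((x :: xs).dropWhile (fun a => decide (a ≠ xs.foldr min x))) ≠ [] := by
      intro h
      apply hβ
      rw [h]
      rfl
    have h2 := congrArg List.length h0
    simp only [List.length_append, List.length_cons] at h2
    have h3 : 0 < ((x :: xs).dropWhile (fun a => decide (a ≠ xs.foldr min x))).length :=
      List.length_pos_iff.mpr h1
    simp only [List.length_cons]
    omega

/-- The map `f(k,τ)`: with `m` the smallest letter of `τ` together with `k`
(`k` not occurring in `τ`), and `τ = α m β` with `α` the maximal prefix of `τ`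
avoiding `m`: `f(k,∅) = k`; `f(k,τ) = kτ` if `k = m`; and for `k > m`,
`f(k,τ) = f(k,β) m` if `α = ∅`, `f(k,τ) = k m α` if `β = ∅`, and
`f(k,τ) = f(k,α) m β` otherwise. -/
def fkt (k : ℕ) : List ℕ → List ℕ
  | [] => [k]
  | x :: xs =>
    if k < xs.foldr min x then k :: x :: xs
    else if (x :: xs).takeWhile (fun a => decide (a ≠ xs.foldr min x)) = [] then
      fkt k (((x :: xs).dropWhile (fun a => decide (a ≠ xs.foldr min x))).tail) ++
        [xs.foldr min x]
    else if ((x :: xs).dropWhile (fun a => decide (a ≠ xs.foldr min x))).tail = [] then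
      k :: xs.foldr min x :: ((x :: xs).takeWhile (fun a => decide (a ≠ xs.foldr min x)))
    else
      fkt k ((x :: xs).takeWhile (fun a => decide (a ≠ xs.foldr min x))) ++
        xs.foldr min x :: ((x :: xs).dropWhile (fun a => decide (a ≠ xs.foldr min x))).tail
termination_by w => w.length
decreasing_by
  all_goals have e : List.foldr (fun (t : {a // a ∈ xs}) s => min t.1 s) x xs.attach =
    xs.foldr min x := List.foldr_attach
  all_goals simp only [e] at *
  · have h1 := (List.dropWhile_sublist (l := x :: xs) (fun a => decide (a ≠ xs.foldr min x))).length_le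
    have h2 := List.length_tail (l := (x :: xs).dropWhile (fun a => decide (a ≠ xs.foldr min x)))
    simp only [List.length_cons] at *
    omega
  · rename_i hk hα hβ
    have h0 : ((x :: xs).takeWhile (fun a => decide (a ≠ xs.foldr min x))) ++
        ((x :: xs).dropWhile (fun a => decide (a ≠ xs.foldr min x))) = x :: xs :=
      List.takeWhile_append_dropWhile ..
    have h1 : ((x :: xs).dropWhile (fun a => decide (a ≠ xs.foldr min x))) ≠ [] := by
      intro h
      apply hβ
      rw [h]
      rfl
    have h2 := congrArg List.length h0
    simp only [List.length_append, List.length_cons] at h2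
    have h3 : 0 < ((x :: xs).dropWhile (fun a => decide (a ≠ xs.foldr min x))).length :=
      List.length_pos_iff.mpr h1
    simp only [List.length_cons]
    omega

/-- `ini w` is the first letter of `w`. -/
def ini (w : List ℕ) : ℕ := w.headD 0

/-- The word of a permutation `π ∈ S_n`, namely `π(1) π(2) … π(n)`
(with values in `{1, …, n}`). -/
def permList {n : ℕ} (π : Equiv.Perm (Fin n)) : List ℕ :=
  List.ofFn fun i => (π i : ℕ) + 1

/-- The bijection `φ`: `φ(π) = f(π(1), f(π(2), ⋯ f(π(n), ∅) ⋯ ))`. -/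
def phiW (w : List ℕ) : List ℕ := w.foldr fkt []

/-- Helper: `decRun l` splits `l` into its maximal weakly decreasing prefix
and the rest. -/
def decRun : List ℕ → List ℕ × List ℕ
  | [] => ([], [])
  | [x] => ([x], [])
  | x :: y :: rest =>
    if y ≤ x then ((x :: (decRun (y :: rest)).1), (decRun (y :: rest)).2)
    else ([x], y :: rest)

theorem decRun_append : ∀ l : List ℕ, (decRun l).1 ++ (decRun l).2 = l
  | [] => rfl
  | [x] => rfl
  | x :: y :: rest => by
    rw [decRun]
    split
    · simpa using decRun_append (y :: rest)
    · rfl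

/-- Helper computing the hook factorization of a word from its reversal: the
rightmost hook of the word starts at its rightmost descent top, i.e. it is
obtained by extending the maximal weakly decreasing prefix of the reversed word
by one more letter; the process is repeated on what remains, and when no
letters usable for a hook remain the word left over is the increasing part
`π₀`. The result is `(π₀, [π₁, …, π_k])`. -/
def hookRev (r : List ℕ) : List ℕ × List (List ℕ) :=
  match h : (decRun r).2 with
  | [] => (r.reverse, [])
  | z :: rest =>
    ((hookRev rest).1, (hookRev rest).2 ++ [z :: (decRun r).1.reverse])
termination_by r.length
decreasing_by
  have h2 := congrArg List.length (decRun_append r)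
  rw [h] at h2
  simp only [List.length_append, List.length_cons] at h2
  omega

/-- The hook factorization `(π₀, [π₁, …, π_k])` of a word
`w = π₀ π₁ ⋯ π_k`, where `π₀` is increasing and each `π_i`, `i ≥ 1`, is a
hook. -/
def hookSplit (w : List ℕ) : List ℕ × List (List ℕ) := hookRev w.reverse

/-- `pix w` is the length of the initial increasing factor `π₀` in the hook
factorization of `w`. -/
def pix (w : List ℕ) : ℕ := (hookSplit w).1.length

/-- `lec w` is the sum of the numbers of inversions of the hooks in the hook
factorization of `w`. -/
def lec (w : List ℕ) : ℕ := ((hookSplit w).2.map inv).sum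

/-- A word `w(1) … w(r)` with `r ≥ 2` is a hook if
`w(1) > w(2) ≤ w(3) ≤ ⋯ ≤ w(r)`. -/
def IsHook (w : List ℕ) : Prop :=
  ∃ a b rest, w = a :: b :: rest ∧ b < a ∧ List.Chain' (· ≤ ·) (b :: rest)

/-- `w(i)` is a left-to-right maximum of `w` if `w(k) < w(i)` for all `k < i`. -/
def IsLRMax (w : List ℕ) (i : ℕ) : Prop := ∀ k < i, w.getD k 0 < w.getD i 0

instance (w : List ℕ) (i : ℕ) : Decidable (IsLRMax w i) := by
  unfold IsLRMax; infer_instance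

/-- `mix w` counts the pairs of positions `i < j` such that either
`w(i) > w(j)` and `w(i)` is a left-to-right maximum, or `w(i) < w(j)` and
there is `k < i` with `w(k) > w(j)`. -/
def mix (w : List ℕ) : ℕ :=
  ((Finset.range w.length ×ˢ Finset.range w.length).filter fun p =>
    p.1 < p.2 ∧ ((w.getD p.2 0 < w.getD p.1 0 ∧ IsLRMax w p.1) ∨
      (w.getD p.1 0 < w.getD p.2 0 ∧ ∃ k ∈ Finset.range p.1, w.getD p.2 0 < w.getD k 0))).card

/-- `das w` counts the positions `i` such that either `w(i) > w(i+1)` and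
`w(i)` is a left-to-right maximum, or `w(i) < w(i+1)` and there is `k < i`
with `w(k) > w(i+1)`. -/
def das (w : List ℕ) : ℕ :=
  ((Finset.range (w.length - 1)).filter fun i =>
    (w.getD (i + 1) 0 < w.getD i 0 ∧ IsLRMax w i) ∨
      (w.getD i 0 < w.getD (i + 1) 0 ∧ ∃ k ∈ Finset.range i, w.getD (i + 1) 0 < w.getD k 0)).card

/-- The values of the left-to-right maxima of a word, listed in increasing
order (which is also their order of occurrence). -/
def lrMaxima : List ℕ → List ℕ
  | [] => []
  | x :: xs => x :: lrMaxima (xs.filter fun a => decide (x < a))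
termination_by l => l.length
decreasing_by
  have e := List.length_filter_le (l := xs.attach) (fun (t : {a // a ∈ xs}) => decide (x < t.1))
  simp only [List.length_unattach, List.length_attach] at e ⊢
  have := xs.length_filter_le (fun a => decide (x < a))
  simp only [List.length_cons]
  exact Nat.lt_succ_of_le e

/-- `Bset w m` is the list of entries of `w` that are smaller than `m` and lie
to the right of (the first occurrence of) `m` in `w`. -/
def Bset (w : List ℕ) (m : ℕ) : List ℕ :=
  ((w.dropWhile fun a => decide (a ≠ m)).tail).filter fun a => decide (a < m)

/-- Helper for `psiS`: replace the letters satisfying `P`, in order, by the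
letters of the first list. -/
def replaceSub (P : ℕ → Bool) : List ℕ → List ℕ → List ℕ
  | _, [] => []
  | rs, x :: xs =>
    if P x then rs.headD x :: replaceSub P rs.tail xs else x :: replaceSub P rs xs

/-- `psiS S w` is `ψ_S(w)`: the result of reversing, in place, the subword of
`w` consisting of the entries belonging to `S`. -/
def psiS (S : List ℕ) (w : List ℕ) : List ℕ :=
  replaceSub (fun a => decide (a ∈ S)) ((w.filter fun a => decide (a ∈ S)).reverse) w

/-- Helper applying the alternating composition
`ψ_{B₁} ∘ ψ_{B₂ ∩ B₁} ∘ ψ_{B₂} ∘ ⋯ ∘ ψ_{B_{k-1}} ∘ ψ_{B_k ∩ B_{k-1}} ∘ ψ_{B_k}`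
to `w`, given the list `[B_k, B_{k-1}, …, B₁]`. -/
def psiChain : List (List ℕ) → List ℕ → List ℕ
  | [], w => w
  | [B], w => psiS B w
  | B :: B' :: rest, w => psiChain (B' :: rest) (psiS (B.inter B') (psiS B w))

/-- The Brändén–Claesson bijection `ψ`. -/
def psi (w : List ℕ) : List ℕ :=
  psiChain (((lrMaxima w).map (Bset w)).reverse) w

lemma exists_desc (w : List ℕ) (hw : ¬ w.Chain' (· ≤ ·)) :
    ∃ u a b v, w = u ++ a :: b :: v ∧ b < a ∧ List.Chain' (· ≤ ·) (b :: v) := by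
  induction w with
  | nil => exact absurd List.isChain_nil hw
  | cons x xs ih =>
    by_cases h : xs.Chain' (· ≤ ·)
    · cases xs with
      | nil => exact absurd (List.isChain_singleton x) hw
      | cons y ys =>
        refine ⟨[], x, y, ys, rfl, ?_, h⟩
        unfold List.Chain' at hw
        rw [List.isChain_cons_cons] at hw
        exact lt_of_not_ge fun hle => hw ⟨hle, h⟩
    · obtain ⟨u, a, b, v, rfl, hba, hc⟩ := ih h
      exact ⟨x :: u, a, b, v, rfl, hba, hc⟩

lemma chain'_lt_of_le {w : List ℕ} (h : w.Chain' (· ≤ ·)) (hn : w.Nodup) :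
    w.Chain' (· < ·) := by
  unfold List.Chain' at h ⊢
  rw [List.isChain_iff_pairwise] at h ⊢
  rw [List.Nodup] at hn
  exact (h.and hn).imp fun hab => lt_of_le_of_ne hab.1 hab.2

lemma exists_fact : ∀ (n : ℕ) (w : List ℕ), w.length ≤ n → w.Nodup →
    ∃ p : List ℕ × List (List ℕ),
      w = p.1 ++ p.2.flatten ∧ List.Chain' (· < ·) p.1 ∧ ∀ h ∈ p.2, IsHook h := by
  intro n
  induction n with
  | zero =>
    intro w hl _
    rw [Nat.le_zero, List.length_eq_zero_iff] at hl
    exact ⟨([], []), by simp [hl], List.isChain_nil, by simp⟩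
  | succ n ih =>
    intro w hl hn
    by_cases hc : w.Chain' (· ≤ ·)
    · exact ⟨(w, []), by simp, chain'_lt_of_le hc hn, by simp⟩
    · obtain ⟨u, a, b, v, rfl, hba, hcb⟩ := exists_desc w hc
      have hu : u.Nodup := (List.sublist_append_left _ _).nodup hn
      have hul : u.length ≤ n := by
        have := @List.length_append _ u (a :: b :: v) ▸ hl
        simp at this; omega
      obtain ⟨p, hp1, hp2, hp3⟩ := ih u hul hu
      refine ⟨(p.1, p.2 ++ [a :: b :: v]), ?_, hp2, ?_⟩
      · simp [hp1, List.flatten_append]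
      · intro h hh
        rcases List.mem_append.mp hh with h1 | h1
        · exact hp3 h h1
        · simp at h1
          exact h1 ▸ ⟨a, b, v, rfl, hba, hcb⟩

lemma hook_not_chain_le {w g : List ℕ} (hg : IsHook g) (hsuf : g <:+: w)
    (hc : w.Chain' (· ≤ ·)) : False := by
  obtain ⟨a, b, rest, rfl, hba, -⟩ := hg
  have := hc.infix hsuf
  rw [List.isChain_cons_cons] at this
  exact absurd this.1 (not_le.mpr hba)

lemma uniq : ∀ (P : List (List ℕ)) (u : List ℕ) (Q : List (List ℕ)) (v : List ℕ),
    u ++ P.flatten = v ++ Q.flatten →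
    u.Chain' (· < ·) → v.Chain' (· < ·) →
    (∀ h ∈ P, IsHook h) → (∀ h ∈ Q, IsHook h) → u = v ∧ P = Q := by
  intro P
  induction P using List.reverseRecOn with
  | nil =>
    intro u Q v heq hu hv _ hQ
    rcases Q.eq_nil_or_concat with rfl | ⟨Q', g, rfl⟩
    · simpa using heq
    · exfalso
      simp only [List.concat_eq_append, List.flatten_nil, List.append_nil,
        List.flatten_append, List.flatten_cons] at heq
      refine hook_not_chain_le (hQ g (by simp)) ?_
        (hu.imp fun _ _ hab => le_of_lt hab)
      exact List.IsSuffix.isInfix ⟨v ++ Q'.flatten, by rw [heq, List.append_assoc]⟩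
  | append_singleton P' h ihP =>
    intro u Q v heq hu hv hP hQ
    rcases Q.eq_nil_or_concat with rfl | ⟨Q', g, rfl⟩
    · exfalso
      simp only [List.concat_eq_append, List.flatten_nil, List.append_nil,
        List.flatten_append, List.flatten_cons, List.append_nil] at heq
      refine hook_not_chain_le (hP h (by simp)) ?_
        (hv.imp fun _ _ hab => le_of_lt hab)
      exact List.IsSuffix.isInfix ⟨u ++ P'.flatten, by rw [← heq, List.append_assoc]⟩
    · simp only [List.concat_eq_append, List.flatten_append, List.flatten_cons,
        List.flatten_nil, List.append_nil, ← List.append_assoc] at heq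
      -- heq : (u ++ P'.flatten) ++ h = (v ++ Q'.flatten) ++ g
      have hsh : h <:+ (v ++ Q'.flatten) ++ g := ⟨u ++ P'.flatten, heq⟩
      have hsg : g <:+ (v ++ Q'.flatten) ++ g := ⟨v ++ Q'.flatten, rfl⟩
      obtain ⟨a, b, r, hhe, hba, hcr⟩ := hP h (by simp)
      obtain ⟨a', b', r', hge, hba', hcr'⟩ := hQ g (by simp)
      have key : ∀ x y : List ℕ, IsHook x → IsHook y → x <:+ y → x = y := by
        rintro x y ⟨c, d, s, rfl, hdc, -⟩ ⟨c', d', s', rfl, hdc', hcs'⟩ hxy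
        rcases List.suffix_cons_iff.mp hxy with he | hs
        · exact he
        · exfalso
          have := (hcs'.suffix hs)
          rw [List.isChain_cons_cons] at this
          exact absurd this.1 (not_le.mpr hdc)
      have hEq : h = g := by
        rcases List.suffix_or_suffix_of_suffix hsh hsg with hs | hs
        · exact key h g ⟨a, b, r, hhe, hba, hcr⟩ ⟨a', b', r', hge, hba', hcr'⟩ hs
        · exact (key g h ⟨a', b', r', hge, hba', hcr'⟩ ⟨a, b, r, hhe, hba, hcr⟩ hs).symm
      subst hEq
      have heq2 : u ++ P'.flatten = v ++ Q'.flatten := by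
        have := List.append_cancel_right heq
        exact this
      obtain ⟨h1, h2⟩ := ihP u Q' v heq2 hu hv (fun x hx => hP x (by simp [hx]))
        (fun x hx => hQ x (by simp [hx]))
      exact ⟨h1, by rw [h2, List.concat_eq_append]⟩


/-- Every finite sequence of distinct natural numbers has a
unique factorization as a (possibly empty) strictly increasing sequence
followed by a concatenation of hooks. -/
theorem hook_factorization_existsUnique (w : List ℕ) (hw : w.Nodup) :
    ∃! p : List ℕ × List (List ℕ),
      w = p.1 ++ p.2.flatten ∧ List.Chain' (· < ·) p.1 ∧ ∀ h ∈ p.2, IsHook h := by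
  obtain ⟨p, hp1, hp2, hp3⟩ := exists_fact w.length w le_rfl hw
  refine ⟨p, ⟨hp1, hp2, hp3⟩, ?_⟩
  rintro ⟨v, Q⟩ ⟨hq1, hq2, hq3⟩
  have heq : v ++ Q.flatten = p.1 ++ p.2.flatten := by rw [← hq1, ← hp1]
  obtain ⟨h1, h2⟩ := uniq Q v p.2 p.1 heq hq2 hp2 hq3 hp3
  exact Prod.ext h1 h2


end PaperStats
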